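/- For every L > 0 and every c > 0 and C > 0 there exists a constant C_L ≥ 0 such that for all real t ≥ 2: ∑_{j=0}^∞ 2^{−jL}·exp(−c·t·exp(−C·2^j)) ≤ C_L·(log(2+t))^{−L}. (The series converges since each term is bounded by 2^{−jL}.) -/

import Mathlib

open Real Finset


/-- Elementary dyadic logarithmic summation lemma: for `L, c, C > 0` there is
`C_L ≥ 0` with `∑_{j≥0} 2^{−jL}·exp(−c·t·exp(−C·2^j)) ≤ C_L·(log(2+t))^{−L}`
for all `t ≥ 2`; the series converges since each term is at most `2^{−jL}`. -/
theorem stmt_10 (L c C : ℝ) (hL : 0 < L) (hc : 0 < c) (hC : 0 < C) :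
    ∃ CL : ℝ, 0 ≤ CL ∧ ∀ t : ℝ, 2 ≤ t →
      Summable (fun j : ℕ =>
        (2 : ℝ) ^ (-(j : ℝ) * L) * Real.exp (-c * t * Real.exp (-C * (2 : ℝ) ^ j))) ∧
      (∑' j : ℕ,
        (2 : ℝ) ^ (-(j : ℝ) * L) * Real.exp (-c * t * Real.exp (-C * (2 : ℝ) ^ j))) ≤
        CL * (Real.log (2 + t)) ^ (-L) := by
  set r : ℝ := (2 : ℝ) ^ (-L) with hrdef
  have hr0 : 0 < r := Real.rpow_pos_of_pos (by norm_num) _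
  have hr1 : r < 1 := by
    rw [hrdef]
    exact Real.rpow_lt_one_of_one_lt_of_neg (by norm_num) (by linarith)
  set n : ℕ := ⌈L⌉₊ + 1 with hndef
  have hn : L + 1 ≤ (n : ℝ) := by
    have := Nat.le_ceil L
    push_cast [hndef]; linarith
  set c' : ℝ := c * Real.exp (-C) / Real.sqrt 2 with hc'def
  have hc' : 0 < c' := by positivity
  set K1 : ℝ := (2 : ℝ) ^ L * (1 + 2 / C) * (Nat.factorial (2 * n) : ℝ) / c' ^ (2 * n) with hK1def
  have hK1 : 0 < K1 := by
    have : (0:ℝ) < (2:ℝ)^L := Real.rpow_pos_of_pos (by norm_num) _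
    have : (0:ℝ) < (Nat.factorial (2*n) : ℝ) := by positivity
    positivity
  set K2 : ℝ := (2 * C) ^ L * (1 - r)⁻¹ with hK2def
  have hK2 : 0 < K2 := by
    have h2C : (0:ℝ) < (2*C)^L := Real.rpow_pos_of_pos (by linarith) _
    have : (0:ℝ) < (1 - r)⁻¹ := by
      rw [inv_pos]; linarith
    positivity
  refine ⟨K1 + K2, by positivity, fun t ht => ?_⟩
  have ht0 : (0:ℝ) < t := by linarith
  set lam : ℝ := Real.log (2 + t) with hlamdef
  have hlam : 0 < lam := Real.log_pos (by linarith)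
  set f : ℕ → ℝ := fun j =>
    (2 : ℝ) ^ (-(j : ℝ) * L) * Real.exp (-c * t * Real.exp (-C * (2 : ℝ) ^ j)) with hfdef
  have hfpow : ∀ j : ℕ, (2 : ℝ) ^ (-(j : ℝ) * L) = r ^ j := by
    intro j
    rw [hrdef, ← Real.rpow_natCast ((2:ℝ) ^ (-L)) j, ← Real.rpow_mul (by norm_num)]
    congr 1; ring
  have hfnonneg : ∀ j, 0 ≤ f j := fun j => by
    have := Real.rpow_pos_of_pos (show (0:ℝ) < 2 by norm_num) (-(j:ℝ) * L)
    positivity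
  have hfle : ∀ j, f j ≤ r ^ j := by
    intro j
    rw [hfdef]
    simp only
    rw [hfpow j]
    have h1 : Real.exp (-c * t * Real.exp (-C * (2 : ℝ) ^ j)) ≤ 1 := by
      apply Real.exp_le_one_iff.mpr
      have h0 : 0 ≤ c * t * Real.exp (-C * (2:ℝ)^j) := by positivity
      linarith
    nlinarith [pow_pos hr0 j, pow_nonneg hr0.le j]
  have hsumgeo : Summable (fun j : ℕ => r ^ j) :=
    summable_geometric_of_lt_one hr0.le hr1
  have hsum : Summable f := Summable.of_nonneg_of_le hfnonneg hfle hsumgeo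
  refine ⟨hsum, ?_⟩
  -- choose the splitting point
  set m : ℕ := ⌊lam / (2 * C)⌋₊ with hmdef
  set j0 : ℕ := Nat.log 2 m with hj0def
  have hA : C * (2:ℝ) ^ j0 ≤ C + lam / 2 := by
    rcases Nat.eq_zero_or_pos m with hm | hm
    · rw [hj0def, hm]
      norm_num
      linarith
    · have h1 : (2:ℕ) ^ j0 ≤ m := Nat.pow_log_le_self 2 hm.ne'
      have h2 : (m : ℝ) ≤ lam / (2 * C) := Nat.floor_le (by positivity)
      have h3 : ((2:ℕ) ^ j0 : ℝ) ≤ (m : ℝ) := by exact_mod_cast h1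
      push_cast at h3
      have h4 := mul_le_mul_of_nonneg_left (h3.trans h2) hC.le
      have h5 : C * (lam / (2 * C)) = lam / 2 := by field_simp
      linarith
  have hB : lam / (2 * C) < (2:ℝ) ^ (j0 + 1) := by
    have h1 : lam / (2 * C) < (m : ℝ) + 1 := Nat.lt_floor_add_one _
    have h2 : (m : ℝ) + 1 ≤ (2:ℝ) ^ (j0 + 1) := by
      rcases Nat.eq_zero_or_pos m with hm | hm
      · rw [hm]; norm_num
        have : (1:ℕ) ≤ 2 ^ (j0 + 1) := Nat.one_le_two_pow
        exact_mod_cast this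
      · have := Nat.lt_pow_succ_log_self (by norm_num : 1 < 2) m
        have h3 : m + 1 ≤ 2 ^ (j0 + 1) := this
        exact_mod_cast h3
    linarith
  have hCcount : ((j0 : ℝ) + 1) ≤ 2 + lam / C := by
    have h1 : (j0 + 1 : ℕ) < 2 ^ (j0 + 1) := Nat.lt_two_pow_self
    have h2 : ((j0:ℝ) + 1) ≤ (2:ℝ) ^ (j0 + 1) := by exact_mod_cast h1.le
    have h3 : (2:ℝ) ^ (j0+1) = 2 * (2:ℝ)^j0 := by ring
    have h4 : (2:ℝ)^j0 ≤ 1 + lam / (2*C) := by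
      rw [← sub_nonneg]
      have h5 : (1 + lam / (2*C)) - (2:ℝ)^j0 = (C + lam/2 - C * 2^j0) / C := by
        field_simp
      rw [h5]
      apply div_nonneg (by linarith) hC.le
    have h6 := mul_le_mul_of_nonneg_left h4 (by norm_num : (0:ℝ) ≤ 2)
    have h7 : 2 * (1 + lam / (2*C)) = 2 + lam / C := by field_simp
    linarith
  -- exp(-lam/2) = 1/sqrt(2+t)
  have h2t : (0:ℝ) < 2 + t := by linarith
  have hexp_half : Real.exp (-(lam/2)) = (Real.sqrt (2+t))⁻¹ := by
    rw [Real.exp_neg]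
    congr 1
    rw [show Real.sqrt (2+t) = (2+t) ^ (1/2 : ℝ) from Real.sqrt_eq_rpow _,
      Real.rpow_def_of_pos h2t]
    congr 1; rw [hlamdef]; ring
  have hsq2 : (0:ℝ) < Real.sqrt 2 := Real.sqrt_pos.mpr (by norm_num)
  have hsqt : (0:ℝ) < Real.sqrt t := Real.sqrt_pos.mpr ht0
  have hsq2t : (0:ℝ) < Real.sqrt (2+t) := Real.sqrt_pos.mpr h2t
  have e1 : Real.sqrt (2+t) ≤ Real.sqrt 2 * Real.sqrt t := by
    rw [← Real.sqrt_mul (by norm_num : (0:ℝ) ≤ 2)]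
    exact Real.sqrt_le_sqrt (by linarith)
  have e2 : Real.sqrt t / Real.sqrt 2 ≤ t / Real.sqrt (2+t) := by
    rw [div_le_div_iff₀ hsq2 hsq2t]
    calc Real.sqrt t * Real.sqrt (2+t) ≤ Real.sqrt t * (Real.sqrt 2 * Real.sqrt t) :=
          mul_le_mul_of_nonneg_left e1 hsqt.le
      _ = (Real.sqrt t * Real.sqrt t) * Real.sqrt 2 := by ring
      _ = t * Real.sqrt 2 := by rw [Real.mul_self_sqrt ht0.le]
  have hkey : c' * Real.sqrt t ≤ c * t * Real.exp (-(C * (2:ℝ) ^ j0)) := by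
    have e3 : Real.exp (-C) * Real.exp (-(lam/2)) ≤ Real.exp (-(C * (2:ℝ)^j0)) := by
      rw [← Real.exp_add]
      exact Real.exp_le_exp.mpr (by linarith)
    have e4 : c' * Real.sqrt t = c * Real.exp (-C) * (Real.sqrt t / Real.sqrt 2) := by
      rw [hc'def]; ring
    have e5 : c * Real.exp (-C) * (Real.sqrt t / Real.sqrt 2)
        ≤ c * Real.exp (-C) * (t / Real.sqrt (2+t)) := by
      apply mul_le_mul_of_nonneg_left e2 (by positivity)
    have e6 : c * Real.exp (-C) * (t / Real.sqrt (2+t))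
        = c * t * (Real.exp (-C) * Real.exp (-(lam/2))) := by
      rw [hexp_half]; ring
    have e7 : c * t * (Real.exp (-C) * Real.exp (-(lam/2)))
        ≤ c * t * Real.exp (-(C * (2:ℝ)^j0)) := by
      apply mul_le_mul_of_nonneg_left e3 (by positivity)
    linarith
  have hhead : ∀ i ∈ Finset.range (j0+1), f i ≤ Real.exp (-(c' * Real.sqrt t)) := by
    intro i hi
    have hij : i ≤ j0 := Nat.lt_succ_iff.mp (Finset.mem_range.mp hi)
    have hp1 : (2:ℝ) ^ (-(i:ℝ) * L) ≤ 1 :=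
      Real.rpow_le_one_of_one_le_of_nonpos (by norm_num)
        (by have : (0:ℝ) ≤ (i:ℝ) := Nat.cast_nonneg i; nlinarith)
    have hp2 : Real.exp (-c * t * Real.exp (-C * (2:ℝ)^i)) ≤ Real.exp (-(c' * Real.sqrt t)) := by
      apply Real.exp_le_exp.mpr
      have hmono : Real.exp (-(C * (2:ℝ)^j0)) ≤ Real.exp (-C * (2:ℝ)^i) := by
        apply Real.exp_le_exp.mpr
        have h2i : (2:ℝ)^i ≤ (2:ℝ)^j0 := pow_le_pow_right₀ (by norm_num) hij
        have := mul_le_mul_of_nonneg_left h2i hC.le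
        linarith
      have hct : (0:ℝ) ≤ c * t := by positivity
      have h8 := mul_le_mul_of_nonneg_left hmono hct
      linarith [hkey, h8]
    calc f i ≤ 1 * Real.exp (-c * t * Real.exp (-C * (2:ℝ)^i)) := by
          rw [hfdef]
          exact mul_le_mul_of_nonneg_right hp1 (Real.exp_pos _).le
      _ ≤ Real.exp (-(c' * Real.sqrt t)) := by rw [one_mul]; exact hp2
  have hheadsum : ∑ i ∈ Finset.range (j0+1), f i
      ≤ ((j0:ℝ)+1) * Real.exp (-(c' * Real.sqrt t)) := by
    have := Finset.sum_le_card_nsmul (Finset.range (j0+1)) f _ hhead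
    rw [Finset.card_range] at this
    rw [nsmul_eq_mul] at this
    push_cast at this ⊢
    linarith
  have hlamL : (0:ℝ) < lam ^ L := Real.rpow_pos_of_pos hlam _
  have ht1 : (1:ℝ) ≤ t := by linarith
  have hlam2t : lam ≤ 2 * t := by
    have := Real.log_le_sub_one_of_pos h2t
    rw [← hlamdef] at this
    linarith
  have eL : lam ^ L ≤ (2:ℝ) ^ L * t ^ L := by
    calc lam ^ L ≤ (2*t) ^ L := Real.rpow_le_rpow hlam.le hlam2t hL.le
      _ = (2:ℝ) ^ L * t ^ L := Real.mul_rpow (by norm_num) ht0.le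
  have ecnt : (j0:ℝ) + 1 ≤ (1 + 2/C) * t := by
    have h1 : lam / C ≤ 2 * t / C := by gcongr
    have h2 : (1 + 2/C) * t = t + 2 * t / C := by ring
    linarith [hCcount]
  have eexp : Real.exp (-(c' * Real.sqrt t))
      ≤ (Nat.factorial (2*n) : ℝ) / c' ^ (2*n) * (t ^ n)⁻¹ := by
    have ep := Real.pow_div_factorial_le_exp _ (by positivity : (0:ℝ) ≤ c' * Real.sqrt t) (2*n)
    have epow : (c' * Real.sqrt t) ^ (2*n) = c' ^ (2*n) * t ^ n := by
      rw [mul_pow]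
      congr 1
      rw [pow_mul, Real.sq_sqrt ht0.le]
    rw [epow] at ep
    have hpos : (0:ℝ) < c' ^ (2*n) * t ^ n / (Nat.factorial (2*n) : ℝ) := by positivity
    rw [Real.exp_neg]
    calc (Real.exp (c' * Real.sqrt t))⁻¹
        ≤ (c' ^ (2*n) * t ^ n / (Nat.factorial (2*n) : ℝ))⁻¹ := by
          apply inv_anti₀ hpos ep
      _ = (Nat.factorial (2*n) : ℝ) / c' ^ (2*n) * (t ^ n)⁻¹ := by
          field_simp
  have epowt : t ^ L * t ≤ t ^ n := by
    have h1 : t ^ L * t = t ^ (L + 1) := by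
      rw [Real.rpow_add_one ht0.ne' L]
    rw [h1, ← Real.rpow_natCast t n]
    exact Real.rpow_le_rpow_of_exponent_le ht1 hn
  have hhead2 : ((j0:ℝ)+1) * Real.exp (-(c' * Real.sqrt t)) ≤ K1 * lam ^ (-L) := by
    have main : lam ^ L * (((j0:ℝ)+1) * Real.exp (-(c' * Real.sqrt t))) ≤ K1 := by
      have htn : (0:ℝ) < t ^ n := by positivity
      have step1 : lam ^ L * (((j0:ℝ)+1) * Real.exp (-(c' * Real.sqrt t)))
          ≤ ((2:ℝ) ^ L * t ^ L) * (((1 + 2/C) * t) *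
            ((Nat.factorial (2*n) : ℝ) / c' ^ (2*n) * (t ^ n)⁻¹)) := by
        have n1 : (0:ℝ) ≤ lam ^ L := hlamL.le
        have n2 : (0:ℝ) ≤ (j0:ℝ) + 1 := by positivity
        have n3 : (0:ℝ) ≤ Real.exp (-(c' * Real.sqrt t)) := (Real.exp_pos _).le
        gcongr
      have step2 : ((2:ℝ) ^ L * t ^ L) * (((1 + 2/C) * t) *
            ((Nat.factorial (2*n) : ℝ) / c' ^ (2*n) * (t ^ n)⁻¹))
          = ((2:ℝ) ^ L * (1 + 2/C) * (Nat.factorial (2*n) : ℝ) / c' ^ (2*n)) *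
            ((t ^ L * t) * (t ^ n)⁻¹) := by ring
      have step3 : (t ^ L * t) * (t ^ n)⁻¹ ≤ 1 := by
        rw [← div_eq_mul_inv, div_le_one htn]
        exact epowt
      have n4 : (0:ℝ) ≤ (2:ℝ) ^ L * (1 + 2/C) * (Nat.factorial (2*n) : ℝ) / c' ^ (2*n) := by
        have : (0:ℝ) ≤ (2:ℝ)^L := (Real.rpow_pos_of_pos (by norm_num) L).le
        positivity
      calc lam ^ L * (((j0:ℝ)+1) * Real.exp (-(c' * Real.sqrt t)))
          ≤ ((2:ℝ) ^ L * (1 + 2/C) * (Nat.factorial (2*n) : ℝ) / c' ^ (2*n)) *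
            ((t ^ L * t) * (t ^ n)⁻¹) := by rw [← step2]; exact step1
        _ ≤ ((2:ℝ) ^ L * (1 + 2/C) * (Nat.factorial (2*n) : ℝ) / c' ^ (2*n)) * 1 :=
            mul_le_mul_of_nonneg_left step3 n4
        _ = K1 := by rw [hK1def, mul_one]
    have h := main
    rw [mul_comm (lam ^ L)] at h
    rw [Real.rpow_neg hlam.le, ← div_eq_mul_inv]
    exact (le_div_iff₀ hlamL).mpr h
  have hsumtail : Summable (fun k : ℕ => f (k + (j0+1))) :=
    (summable_nat_add_iff (j0+1)).mpr hsum
  have hsumtailgeo : Summable (fun k : ℕ => r ^ (j0+1) * r ^ k) := hsumgeo.mul_left _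
  have htail1 : ∑' k : ℕ, f (k + (j0+1)) ≤ r ^ (j0+1) * (1 - r)⁻¹ := by
    calc ∑' k : ℕ, f (k+(j0+1)) ≤ ∑' k : ℕ, r ^ (j0+1) * r ^ k := by
          apply Summable.tsum_le_tsum _ hsumtail hsumtailgeo
          intro k
          calc f (k+(j0+1)) ≤ r ^ (k+(j0+1)) := hfle _
            _ = r ^ (j0+1) * r ^ k := by rw [pow_add]; ring
      _ = r ^ (j0+1) * (1-r)⁻¹ := by rw [tsum_mul_left, tsum_geometric_of_lt_one hr0.le hr1]
  have hrpow : r ^ (j0+1) ≤ (2*C) ^ L * lam ^ (-L) := by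
    have h1 : r ^ (j0+1) = ((2:ℝ) ^ (j0+1)) ^ (-L) := by
      rw [hrdef, ← Real.rpow_natCast ((2:ℝ)^(-L)) (j0+1),
        ← Real.rpow_mul (by norm_num : (0:ℝ) ≤ 2),
        ← Real.rpow_natCast (2:ℝ) (j0+1), ← Real.rpow_mul (by norm_num : (0:ℝ) ≤ 2)]
      congr 1; ring
    have hpos2 : (0:ℝ) < lam / (2*C) := by positivity
    have h2 : ((2:ℝ) ^ (j0+1)) ^ (-L) ≤ (lam / (2*C)) ^ (-L) := by
      rw [Real.rpow_neg (by positivity), Real.rpow_neg hpos2.le]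
      apply inv_anti₀ (Real.rpow_pos_of_pos hpos2 _)
      exact Real.rpow_le_rpow hpos2.le hB.le hL.le
    have h3 : (lam / (2*C)) ^ (-L) = (2*C) ^ L * lam ^ (-L) := by
      rw [Real.div_rpow hlam.le (by positivity : (0:ℝ) ≤ 2*C),
        Real.rpow_neg (by positivity : (0:ℝ) ≤ 2*C), div_inv_eq_mul, mul_comm]
    rw [h1]
    exact h2.trans_eq h3
  have htail : ∑' k : ℕ, f (k + (j0+1)) ≤ K2 * lam ^ (-L) := by
    have h4 : (0:ℝ) ≤ (1-r)⁻¹ := by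
      rw [inv_nonneg]; linarith
    have h5 := mul_le_mul_of_nonneg_right hrpow h4
    have h6 : (2*C) ^ L * lam ^ (-L) * (1-r)⁻¹ = K2 * lam ^ (-L) := by
      rw [hK2def]; ring
    linarith [htail1]
  rw [← hsum.sum_add_tsum_nat_add (j0+1)]
  calc (∑ i ∈ Finset.range (j0+1), f i) + ∑' k : ℕ, f (k+(j0+1))
      ≤ K1 * lam^(-L) + K2 * lam^(-L) := add_le_add (hheadsum.trans hhead2) htail
    _ = (K1+K2) * lam^(-L) := by ring
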